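/- For all a, b > 0 with a ≠ b, (3/(2π))·C̄(a,b) + (1 - 3/(2π))·H(a,b) < P(a,b) < (5/8)·C̄(a,b) + (3/8)·H(a,b), and the constants 3/(2π) and 5/8 are best possible. -/

import Mathlib

open Real

noncomputable def Amean (a b : ℝ) : ℝ := (a + b) / 2
noncomputable def Gmean (a b : ℝ) : ℝ := Real.sqrt (a * b)
noncomputable def Hmean (a b : ℝ) : ℝ := 2 * a * b / (a + b)
noncomputable def Cmean (a b : ℝ) : ℝ := (a ^ 2 + b ^ 2) / (a + b)
noncomputable def Cbar (a b : ℝ) : ℝ := 2 * (a ^ 2 + a * b + b ^ 2) / (3 * (a + b))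
noncomputable def Smean (a b : ℝ) : ℝ := Real.sqrt ((a ^ 2 + b ^ 2) / 2)
noncomputable def Pmean (a b : ℝ) : ℝ := (a - b) / (2 * Real.arcsin ((a - b) / (a + b)))
noncomputable def Tmean (a b : ℝ) : ℝ := (a - b) / (2 * Real.arctan ((a - b) / (a + b)))

open Set

lemma sin_sub_cos_pos {x : ℝ} (hx : 0 < x) (hx2 : x ≤ π / 2) : x * Real.cos x < Real.sin x := by
  have key : StrictMonoOn (fun y : ℝ => Real.sin y - y * Real.cos y) (Icc 0 (π/2)) := by
    apply strictMonoOn_of_deriv_pos (convex_Icc _ _)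
    · fun_prop
    · intro y hy
      rw [interior_Icc] at hy
      have hd : HasDerivAt (fun y : ℝ => Real.sin y - y * Real.cos y) (y * Real.sin y) y := by
        have h1 := Real.hasDerivAt_sin y
        have h2 := (hasDerivAt_id y).mul (Real.hasDerivAt_cos y)
        exact (h1.sub h2).congr_deriv (by simp only [id]; ring)
      rw [hd.deriv]
      exact mul_pos hy.1 (Real.sin_pos_of_pos_of_lt_pi hy.1 (lt_of_lt_of_le hy.2 (by linarith [Real.pi_pos])))
  have := key (by constructor <;> [rfl; positivity]) ⟨hx.le, hx2⟩ hx
  simpa using this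

lemma cusa {x : ℝ} (hx : 0 < x) (hx2 : x ≤ π / 2) : 3 * Real.sin x < x * (2 + Real.cos x) := by
  have key2 : StrictMonoOn (fun y : ℝ => 2 - 2 * Real.cos y - y * Real.sin y) (Icc 0 (π/2)) := by
    apply strictMonoOn_of_deriv_pos (convex_Icc _ _)
    · fun_prop
    · intro y hy
      rw [interior_Icc] at hy
      have hd : HasDerivAt (fun y : ℝ => 2 - 2 * Real.cos y - y * Real.sin y)
          (Real.sin y - y * Real.cos y) y := by
        have h1 := ((Real.hasDerivAt_cos y).const_mul (2:ℝ)).const_sub (2:ℝ)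
        have h2 := (hasDerivAt_id y).mul (Real.hasDerivAt_sin y)
        exact (h1.sub h2).congr_deriv (by simp only [id]; ring)
      rw [hd.deriv]
      have := sin_sub_cos_pos hy.1 hy.2.le
      linarith
  have hgp : ∀ y : ℝ, 0 < y → y ≤ π / 2 → 0 < 2 - 2 * Real.cos y - y * Real.sin y := by
    intro y h1 h2
    have := key2 (left_mem_Icc.mpr (by positivity)) ⟨h1.le, h2⟩ h1
    simpa using this
  have key : StrictMonoOn (fun y : ℝ => y * (2 + Real.cos y) - 3 * Real.sin y) (Icc 0 (π/2)) := by
    apply strictMonoOn_of_deriv_pos (convex_Icc _ _)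
    · fun_prop
    · intro y hy
      rw [interior_Icc] at hy
      have hd : HasDerivAt (fun y : ℝ => y * (2 + Real.cos y) - 3 * Real.sin y)
          (2 - 2 * Real.cos y - y * Real.sin y) y := by
        have h1 := (hasDerivAt_id y).mul ((Real.hasDerivAt_cos y).const_add (2:ℝ))
        have h2 := (Real.hasDerivAt_sin y).const_mul (3:ℝ)
        exact (h1.sub h2).congr_deriv (by simp only [id]; ring)
      rw [hd.deriv]
      exact hgp y hy.1 hy.2.le
  have := key (left_mem_Icc.mpr (by positivity)) ⟨hx.le, hx2⟩ hx
  simp at this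
  linarith

lemma lemU {x : ℝ} (hx : 0 < x) (hx2 : x < π / 2) : 6 * Real.sin x + x * Real.sin x ^ 2 < 6 * x := by
  have hc := cusa hx hx2.le
  have hsc := Real.sin_sq_add_cos_sq x
  nlinarith [sq_nonneg (1 - Real.cos x), hx]

lemma lemL_aux {y : ℝ} (hy0 : 0 < y) (hy1 : y < π/2 - 4/5) :
    π/2 - y < Real.cos y + (1-2/π)*(π/2-y)*Real.cos y^2 := by
  have hpi := Real.pi_gt_d6
  have hpi' := Real.pi_lt_d6
  have hc0 : (0:ℝ) < 1 - 2 / π := by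
    rw [sub_pos, div_lt_one Real.pi_pos]; linarith
  have hcy : 1 - y^2/2 < Real.cos y := Real.one_sub_sq_div_two_lt_cos (by linarith)
  have hcy0 : 0 < Real.cos y := Real.cos_pos_of_mem_Ioo ⟨by linarith, by linarith⟩
  have hyl : (0:ℝ) < 1 - y^2/2 := by nlinarith
  have hcos2 : 1 - y^2 ≤ Real.cos y ^ 2 := by nlinarith
  have hsum : (0:ℝ) ≤ π*(π-1)/2 - (π-2)*(y + (π/2 - 4/5)) := by nlinarith
  have hqu : (0:ℝ) < 2 - π*(π-1)/2*(π/2-4/5) + (π-2)*(π/2-4/5)^2 := by nlinarith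
  have hP : (0:ℝ) < 2 - π*(π-1)/2*y + (π-2)*y^2 := by
    nlinarith [mul_nonneg (sub_nonneg.mpr hy1.le) hsum]
  have hquad : 0 < 2/π*y - (π-1)/2*y^2 + (1-2/π)*y^3 := by
    have h := mul_pos (mul_pos hy0 hP) (inv_pos.mpr Real.pi_pos)
    have heq : y * (2 - π*(π-1)/2*y + (π-2)*y^2) * π⁻¹
        = 2/π*y - (π-1)/2*y^2 + (1-2/π)*y^3 := by
      field_simp
    rwa [heq] at h
  have hid : (1 - y^2/2) + (1-2/π)*(π/2-y)*(1-y^2)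
      = (π/2 - y) + (2/π*y - (π-1)/2*y^2 + (1-2/π)*y^3) := by
    field_simp; ring
  have hfac : 0 ≤ (1 - 2/π) * (π/2 - y) := by
    apply mul_nonneg hc0.le; linarith
  have step1 : (1 - 2/π) * (π/2 - y) * (1 - y^2) ≤ (1 - 2/π) * (π/2 - y) * Real.cos y ^2 :=
    mul_le_mul_of_nonneg_left hcos2 hfac
  linarith

lemma lemL {x : ℝ} (hx : 0 < x) (hx2 : x < π / 2) :
    x < Real.sin x + (1 - 2 / π) * x * Real.sin x ^ 2 := by
  have hpi := Real.pi_gt_d6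
  have hpi' := Real.pi_lt_d6
  have hc0 : (0:ℝ) < 1 - 2 / π := by
    rw [sub_pos, div_lt_one Real.pi_pos]; linarith
  rcases le_or_gt x (4/5) with hsm | hlg
  · have hb := Real.sin_bound (x := x) (by rw [abs_of_pos hx]; linarith)
    rw [abs_of_pos hx] at hb
    have hp : x - x^3/6 - x^4 * (5/96) ≤ Real.sin x := by
      have := abs_le.mp hb
      have h45 : x^5/100 ≤ x^4*(5/96) := by
        have h4 := pow_pos hx 4; nlinarith [mul_le_mul_of_nonneg_left (show x ≤ 1 by linarith) h4.le]
      linarith [this.1]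
    have hq : (13:ℝ)/15 ≤ 1 - x^2/6 - 5*x^3/96 := by nlinarith
    have hpx : x - x^3/6 - x^4 * (5/96) = x * (1 - x^2/6 - 5*x^3/96) := by ring
    set q := 1 - x^2/6 - 5*x^3/96 with hqdef
    have hppos : 0 < x * q := by positivity
    have h1 : x * q ≤ Real.sin x := by rw [← hpx]; exact hp
    have hs2 : (x*q)^2 ≤ Real.sin x ^ 2 := by nlinarith
    have hkey : 1/6 + 5*x/96 < (1 - 2/π) * q^2 := by
      have hq2 : ((13:ℝ)/15)^2 ≤ q^2 := by nlinarith
      have h1' : (1 - 2/π) * ((13/15):ℝ)^2 ≤ (1 - 2/π) * q^2 :=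
        mul_le_mul_of_nonneg_left hq2 hc0.le
      have h2 : (1:ℝ) - 2/3.141592 ≤ 1 - 2/π := by
        have : 2/π ≤ 2/3.141592 := by
          apply div_le_div_of_nonneg_left <;> norm_num <;> linarith
        linarith
      nlinarith
    have hc0x : (0:ℝ) ≤ (1 - 2/π) * x := mul_nonneg hc0.le hx.le
    have hmul := mul_le_mul_of_nonneg_left hs2 hc0x
    have hx3 : (0:ℝ) < x^3 := by positivity
    have : x = x * q + x^3 * (1/6 + 5*x/96) := by rw [hqdef]; ring
    nlinarith [mul_lt_mul_of_pos_left hkey hx3]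
  · have hsx : Real.sin x = Real.cos (π/2 - x) := by rw [Real.cos_pi_div_two_sub]
    have h := lemL_aux (y := π/2 - x) (by linarith) (by linarith)
    have hxx : π/2 - (π/2 - x) = x := by ring
    rw [hxx] at h
    rw [hsx]
    linarith

lemma ratio_bounds {t : ℝ} (ht0 : 0 < t) (ht1 : t < 1) :
    1 - (1 - 2/π) * t^2 < t / Real.arcsin t ∧ t / Real.arcsin t < 1 - t^2/6 := by
  have hx0 : 0 < Real.arcsin t := Real.arcsin_pos.mpr ht0
  have hx2 : Real.arcsin t < π/2 := Real.arcsin_lt_pi_div_two.mpr ht1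
  have hst : Real.sin (Real.arcsin t) = t := Real.sin_arcsin (by linarith) ht1.le
  have hU := lemU hx0 hx2
  have hL := lemL hx0 hx2
  rw [hst] at hU hL
  constructor
  · rw [lt_div_iff₀ hx0]; nlinarith
  · rw [div_lt_iff₀ hx0]; nlinarith

lemma combo_eq {a b : ℝ} (hb : 0 < b) (hab : b < a) (γ : ℝ) :
    γ * Cbar a b + (1 - γ) * Hmean a b
      = ((a+b)/2) * (1 + (4*γ-3)/3 * ((a-b)/(a+b))^2) := by
  unfold Cbar Hmean
  have h : a + b ≠ 0 := ne_of_gt (by linarith)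
  field_simp
  ring

lemma t_mem {a b : ℝ} (hb : 0 < b) (hab : b < a) :
    0 < (a-b)/(a+b) ∧ (a-b)/(a+b) < 1 := by
  have h : (0:ℝ) < a + b := by linarith
  constructor
  · apply div_pos (by linarith) h
  · rw [div_lt_one h]; linarith

lemma pmean_eq {a b : ℝ} (hb : 0 < b) (hab : b < a) :
    Pmean a b = ((a+b)/2) * (((a-b)/(a+b)) / Real.arcsin ((a-b)/(a+b))) := by
  unfold Pmean
  have h : a + b ≠ 0 := ne_of_gt (by linarith)
  obtain ⟨ht0, ht1⟩ := t_mem hb hab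
  have hX : Real.arcsin ((a-b)/(a+b)) ≠ 0 := ne_of_gt (Real.arcsin_pos.mpr ht0)
  field_simp

lemma lower_lt {a b α : ℝ} (hb : 0 < b) (hab : b < a) (hα : α ≤ 3/(2*π)) :
    α * Cbar a b + (1 - α) * Hmean a b < Pmean a b := by
  obtain ⟨ht0, ht1⟩ := t_mem hb hab
  set t := (a-b)/(a+b)
  have hs : (0:ℝ) < (a+b)/2 := by linarith
  rw [combo_eq hb hab, pmean_eq hb hab]
  apply mul_lt_mul_of_pos_left _ hs
  have hr := (ratio_bounds ht0 ht1).1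
  have hpπ := Real.pi_pos
  have h4 : (4:ℝ)*(3/(2*π)) = 6/π := by field_simp; ring
  have hcle : (4*α-3)/3 ≤ 2/π - 1 := by
    have : 4*α ≤ 6/π := by rw [← h4]; linarith
    have h6 : (6:ℝ)/π = 3*(2/π) := by ring
    linarith [this, h6 ▸ this]
  have ht2 : 0 < t^2 := by positivity
  nlinarith

lemma upper_lt {a b β : ℝ} (hb : 0 < b) (hab : b < a) (hβ : 5/8 ≤ β) :
    Pmean a b < β * Cbar a b + (1 - β) * Hmean a b := by
  obtain ⟨ht0, ht1⟩ := t_mem hb hab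
  set t := (a-b)/(a+b)
  have hs : (0:ℝ) < (a+b)/2 := by linarith
  rw [combo_eq hb hab, pmean_eq hb hab]
  apply mul_lt_mul_of_pos_left _ hs
  have hr := (ratio_bounds ht0 ht1).2
  have hcge : -(1:ℝ)/6 ≤ (4*β-3)/3 := by linarith
  have ht2 : 0 < t^2 := by positivity
  nlinarith

lemma Cbar_comm (a b : ℝ) : Cbar a b = Cbar b a := by
  unfold Cbar; rw [add_comm b a]; ring_nf

lemma Hmean_comm (a b : ℝ) : Hmean a b = Hmean b a := by
  unfold Hmean; rw [add_comm b a]; ring_nf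

lemma Pmean_comm (a b : ℝ) : Pmean a b = Pmean b a := by
  unfold Pmean
  have h : (b - a)/(b + a) = -((a-b)/(a+b)) := by
    rw [add_comm b a, ← neg_div]; ring_nf
  rw [h, Real.arcsin_neg]
  rw [mul_neg, div_neg, ← neg_div, neg_sub]

lemma lower_all {a b α : ℝ} (ha : 0 < a) (hb : 0 < b) (hne : a ≠ b) (hα : α ≤ 3/(2*π)) :
    α * Cbar a b + (1 - α) * Hmean a b < Pmean a b := by
  rcases hne.lt_or_gt with h | h
  · rw [Cbar_comm, Hmean_comm, Pmean_comm]
    exact lower_lt ha h hα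
  · exact lower_lt hb h hα

lemma upper_all {a b β : ℝ} (ha : 0 < a) (hb : 0 < b) (hne : a ≠ b) (hβ : 5/8 ≤ β) :
    Pmean a b < β * Cbar a b + (1 - β) * Hmean a b := by
  rcases hne.lt_or_gt with h | h
  · rw [Cbar_comm, Hmean_comm, Pmean_comm]
    exact upper_lt ha h hβ
  · exact upper_lt hb h hβ

lemma combo_one {t γ : ℝ} (ht0 : 0 < t) (ht1 : t < 1) :
    γ * Cbar (1+t) (1-t) + (1 - γ) * Hmean (1+t) (1-t) = 1 + (4*γ-3)/3 * t^2 := by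
  rw [combo_eq (by linarith) (by linarith) γ,
    show ((1+t)-(1-t))/((1+t)+(1-t)) = t by ring,
    show ((1+t)+(1-t))/2 = (1:ℝ) by ring, one_mul]

lemma pmean_one {t : ℝ} (ht0 : 0 < t) (ht1 : t < 1) :
    Pmean (1+t) (1-t) = t / Real.arcsin t := by
  rw [pmean_eq (by linarith) (by linarith),
    show ((1+t)-(1-t))/((1+t)+(1-t)) = t by ring,
    show ((1+t)+(1-t))/2 = (1:ℝ) by ring, one_mul]

set_option maxHeartbeats 1000000 in
lemma alpha_sharp {α : ℝ} (hα : 3/(2*π) < α)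
    (h : ∀ a b : ℝ, 0 < a → 0 < b → a ≠ b →
      α * Cbar a b + (1 - α) * Hmean a b < Pmean a b) : False := by
  have hpi := Real.pi_gt_d6
  have hpi' := Real.pi_lt_d6
  have hpi0 := Real.pi_pos
  obtain ⟨c, hceq, hcgt⟩ : ∃ c, c = (4*α-3)/3 ∧ 2/π - 1 < c := by
    refine ⟨(4*α-3)/3, rfl, ?_⟩
    have h4 : (2:ℝ)/π - 1 = (4*(3/(2*π))-3)/3 := by field_simp; ring
    linarith [h4]
  obtain ⟨δ, hδ, hce⟩ : ∃ δ, 0 < δ ∧ c = 2/π - 1 + δ :=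
    ⟨c - (2/π - 1), by linarith, by ring⟩
  obtain ⟨M, hM0, hcM, hcM2⟩ : ∃ M, 0 ≤ M ∧ c ≤ M ∧ -M ≤ c :=
    ⟨|c|, abs_nonneg c, le_abs_self c, neg_abs_le c⟩
  obtain ⟨y, hy0, hy12, hy'⟩ : ∃ y, 0 < y ∧ y ≤ 1/2 ∧ y*(2*(M+1)) ≤ δ :=
    ⟨min (1/2) (δ/(2*(M+1))), lt_min (by norm_num) (by positivity), min_le_left _ _,
      (le_div_iff₀ (by positivity)).mp (min_le_right _ _)⟩
  have hyδ : y ≤ δ/2 := by nlinarith [mul_nonneg hy0.le hM0]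
  have hMy : M*y^2 ≤ δ/2 := by
    nlinarith [mul_le_mul_of_nonneg_left hy12 (mul_nonneg hM0 hy0.le),
      mul_nonneg hM0 hy0.le]
  have hcy0 : 0 < Real.cos y := Real.cos_pos_of_mem_Ioo ⟨by linarith, by linarith⟩
  have hsy0 : 0 < Real.sin y := Real.sin_pos_of_pos_of_lt_pi hy0 (by linarith)
  have hsc := Real.sin_sq_add_cos_sq y
  have hcy1 : Real.cos y < 1 := by nlinarith
  have hcq : 1 - y^2 ≤ Real.cos y ^ 2 := by
    have hcy : 1 - y^2/2 < Real.cos y := Real.one_sub_sq_div_two_lt_cos (by linarith)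
    nlinarith
  have hcq1 : Real.cos y ^ 2 ≤ 1 := by nlinarith
  have hA1 : 1 + c - M*y^2 ≤ 1 + c*Real.cos y^2 := by
    have hu1 : 0 ≤ 1 - Real.cos y^2 := by linarith
    have hu2 : 1 - Real.cos y^2 ≤ y^2 := by linarith
    have e1 := mul_le_mul_of_nonneg_right hcM hu1
    have e2 := mul_le_mul_of_nonneg_left hu2 hM0
    nlinarith
  have hA4 : 1 ≤ (π/2 - y)*(1 + c - M*y^2) := by
    have e0 : (π/2-y)*(2/π) = 1 - 2*y/π := by field_simp
    have e1 : 2*y/π ≤ 2*y/3 :=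
      div_le_div_of_nonneg_left (by linarith) (by norm_num) (by linarith)
    have e2 : (1:ℝ) ≤ π/2 - y := by linarith
    have e3 : δ/2 ≤ δ - M*y^2 := by linarith
    have e4 : δ/2 ≤ (π/2 - y)*(δ - M*y^2) := by
      calc δ/2 = 1*(δ/2) := by ring
      _ ≤ (π/2 - y)*(δ - M*y^2) := mul_le_mul e2 e3 (by linarith) (by linarith)
    have e5 : (π/2 - y)*(1 + c - M*y^2)
        = (π/2-y)*(2/π) + (π/2 - y)*(δ - M*y^2) := by rw [hce]; ring
    rw [e5, e0]
    linarith
  have hkey : Real.cos y ≤ (π/2 - y)*(1 + c*Real.cos y^2) := by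
    have := mul_le_mul_of_nonneg_left hA1 (show (0:ℝ) ≤ π/2 - y by linarith)
    linarith [Real.cos_le_one y]
  have harc : Real.arcsin (Real.cos y) = π/2 - y := by
    rw [← Real.sin_pi_div_two_sub]
    exact Real.arcsin_sin (by linarith) (by linarith)
  have h' := h (1 + Real.cos y) (1 - Real.cos y) (by linarith) (by linarith)
    (by intro hh; nlinarith)
  rw [combo_one hcy0 hcy1, pmean_one hcy0 hcy1, harc, ← hceq] at h'
  rw [lt_div_iff₀ (by linarith : (0:ℝ) < π/2 - y)] at h'
  nlinarith [h', hkey]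

set_option maxHeartbeats 1000000 in
lemma beta_sharp {β : ℝ} (hβ : β < 5/8)
    (h : ∀ a b : ℝ, 0 < a → 0 < b → a ≠ b →
      Pmean a b < β * Cbar a b + (1 - β) * Hmean a b) : False := by
  obtain ⟨c, hceq, hclt⟩ : ∃ c, c = (4*β-3)/3 ∧ c < -1/6 :=
    ⟨(4*β-3)/3, rfl, by linarith⟩
  obtain ⟨ε, hε, hcε⟩ : ∃ ε, 0 < ε ∧ -c = 1/6 + ε :=
    ⟨-1/6 - c, by linarith, by ring⟩
  obtain ⟨x, hx0, hx12, hxε⟩ : ∃ x, 0 < x ∧ x ≤ 1/2 ∧ x ≤ ε :=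
    ⟨min (1/2) ε, lt_min (by norm_num) hε, min_le_left _ _, min_le_right _ _⟩
  have hb := Real.sin_bound (x := x) (by rw [abs_of_pos hx0]; linarith)
  rw [abs_of_pos hx0] at hb
  have hp : x - x^3/6 - x^4 * (5/96) ≤ Real.sin x := by
    have := abs_le.mp hb
    have h45 : x^5/100 ≤ x^4*(5/96) := by
      have h4 := pow_pos hx0 4; nlinarith [mul_le_mul_of_nonneg_left (show x ≤ 1 by linarith) h4.le]
    linarith [this.1]
  obtain ⟨q, hqeq, hq⟩ : ∃ q, q = 1 - x^2/6 - 5*x^3/96 ∧ (13:ℝ)/15 ≤ q :=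
    ⟨1 - x^2/6 - 5*x^3/96, rfl, by nlinarith⟩
  have hpx : x - x^3/6 - x^4 * (5/96) = x * q := by rw [hqeq]; ring
  have h1 : x * q ≤ Real.sin x := by rw [← hpx]; exact hp
  have hxq0 : 0 < x * q := by positivity
  have hpi0 := Real.pi_pos
  have hpi := Real.pi_gt_d6
  have hsin0 : 0 < Real.sin x := Real.sin_pos_of_pos_of_lt_pi hx0 (by linarith)
  have hsin1 : Real.sin x < 1 := by
    have := Real.sin_lt hx0
    linarith
  have hq2 : 1 - x ≤ q^2 := by rw [hqeq]; nlinarith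
  have hcoef : 1/6 + 5*x/96 ≤ (-c)*q^2 := by
    have e1 : (1/6 + ε)*(1-x) ≤ (1/6 + ε)*q^2 :=
      mul_le_mul_of_nonneg_left hq2 (by linarith)
    rw [hcε]
    nlinarith
  have hts : (x*q)^2 ≤ Real.sin x ^2 := by nlinarith
  have hcx0 : c*x ≤ 0 := by nlinarith
  have hcs : (c*x)*Real.sin x^2 ≤ (c*x)*(x*q)^2 := mul_le_mul_of_nonpos_left hts hcx0
  have hkey : x + c*x*Real.sin x^2 ≤ Real.sin x := by
    have hx3 : (0:ℝ) < x^3 := by positivity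
    have e2 := mul_le_mul_of_nonneg_left hcoef hx3.le
    nlinarith [h1, hcs]
  have harc : Real.arcsin (Real.sin x) = x :=
    Real.arcsin_sin (by linarith) (by linarith)
  have h' := h (1 + Real.sin x) (1 - Real.sin x) (by linarith) (by linarith)
    (by intro hh; nlinarith)
  rw [combo_one hsin0 hsin1, pmean_one hsin0 hsin1, harc, ← hceq] at h'
  rw [div_lt_iff₀ hx0] at h'
  nlinarith [h', hkey]

theorem sharp_stmt_14 :
    (∀ a b : ℝ, 0 < a → 0 < b → a ≠ b →
        (3 / (2 * Real.pi)) * Cbar a b + (1 - (3 / (2 * Real.pi))) * Hmean a b < Pmean a b ∧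
        Pmean a b < (5 / 8) * Cbar a b + (1 - (5 / 8)) * Hmean a b) ∧
    (∀ α : ℝ, (∀ a b : ℝ, 0 < a → 0 < b → a ≠ b →
        α * Cbar a b + (1 - α) * Hmean a b < Pmean a b) ↔ α ≤ (3 / (2 * Real.pi))) ∧
    (∀ β : ℝ, (∀ a b : ℝ, 0 < a → 0 < b → a ≠ b →
        Pmean a b < β * Cbar a b + (1 - β) * Hmean a b) ↔ β ≥ (5 / 8)) := by
  refine ⟨fun a b ha hb hne => ⟨lower_all ha hb hne le_rfl, upper_all ha hb hne le_rfl⟩, ?_, ?_⟩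
  · intro α
    constructor
    · intro h
      by_contra hα
      push_neg at hα
      exact alpha_sharp hα h
    · intro hα a b ha hb hne
      exact lower_all ha hb hne hα
  · intro β
    constructor
    · intro h
      by_contra hβ
      push_neg at hβ
      exact beta_sharp hβ h
    · intro hβ a b ha hb hne
      exact upper_all ha hb hne hβ
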